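/- For μ-almost every A ∈ 2^ω, the many-one degree of A contains an infinite antichain of 1-degrees: there is a family (B_i)_{i∈ω} of subsets of ω with B_i ≡_m A for all i and B_i ≰_1 B_j for all i ≠ j. -/

import Mathlib

open MeasureTheory

/-- The cylinder of binary sequences extending the finite string `σ`. -/
def cylinder (σ : List Bool) : Set (ℕ → Bool) :=
  {X | ∀ i, i < σ.length → X i = σ.getD i false}

/-- `μ` is the fair-coin product measure on Cantor space:
each cylinder `[σ]` has measure `2^{-|σ|}`. -/
def IsFairCoin (μ : Measure (ℕ → Bool)) : Prop :=
  ∀ σ : List Bool, μ (cylinder σ) = (1 / 2 : ENNReal) ^ σ.length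

lemma eq_zero_of_le_half_pow {x : ENNReal} (h : ∀ n : ℕ, x ≤ (1/2 : ENNReal) ^ n) : x = 0 := by
  refine le_antisymm ?_ (zero_le)
  have ht : Filter.Tendsto (fun n : ℕ => (1/2 : ENNReal) ^ n) Filter.atTop (nhds 0) :=
    ENNReal.tendsto_pow_atTop_nhds_zero_of_lt_one (by norm_num)
  exact ge_of_tendsto' ht h

lemma mu_prescribed {μ : Measure (ℕ → Bool)} (hμ : IsFairCoin μ) {ι : Type} [Fintype ι]
    (e : ι → ℕ) (he : Function.Injective e) (β : ι → Bool) :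
    μ {A | ∀ k, A (e k) = β k} ≤ (1/2 : ENNReal) ^ (Fintype.card ι) := by
  classical
  set N : ℕ := (Finset.univ.sup fun k : ι => e k) + 1 with hNdef
  have hlt : ∀ k, e k < N := fun k => Nat.lt_succ_of_le (Finset.le_sup (Finset.mem_univ k))
  set e' : ι → Fin N := fun k => ⟨e k, hlt k⟩ with he'def
  have he' : Function.Injective e' := by
    intro a b h
    exact he (congrArg Fin.val h)
  have hm : Fintype.card ι ≤ N := by
    have := Fintype.card_le_of_injective e' he'
    simpa using this
  have hcover : {A : ℕ → Bool | ∀ k, A (e k) = β k} ⊆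
      ⋃ j : ({i : Fin N // (i : ℕ) ∉ Set.range e} → Bool), cylinder (List.ofFn (fun i : Fin N =>
        if h : (i : ℕ) ∈ Set.range e then β h.choose else j ⟨i, h⟩)) := by
    intro A hA
    refine Set.mem_iUnion.2 ⟨fun i => A i.1, ?_⟩
    intro i hi
    rw [List.length_ofFn] at hi
    rw [List.getD_eq_getElem _ _ (by simpa [hNdef] using hi), List.getElem_ofFn]
    by_cases h : (i : ℕ) ∈ Set.range e
    · simp only [h, dif_pos]
      have hc : e h.choose = i := h.choose_spec
      have h2 := hA h.choose
      rw [hc] at h2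
      exact h2
    · simp [h]
  have hcard : Fintype.card {i : Fin N // (i : ℕ) ∈ Set.range e} = Fintype.card ι := by
    have h1 : ∀ i : Fin N, ((i : ℕ) ∈ Set.range e) ↔ (i ∈ Set.range e') := by
      intro i
      constructor
      · rintro ⟨k, hk⟩; exact ⟨k, by simp [he'def, Fin.ext_iff, hk]⟩
      · rintro ⟨k, hk⟩; exact ⟨k, by simp [he'def, Fin.ext_iff] at hk; exact hk⟩
    rw [Fintype.card_congr (Equiv.subtypeEquivRight h1)]
    exact Set.card_range_of_injective he'
  have hcardJ : Fintype.card ({i : Fin N // (i : ℕ) ∉ Set.range e} → Bool)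
      = 2 ^ (N - Fintype.card ι) := by
    rw [Fintype.card_fun, Fintype.card_bool, Fintype.card_subtype_compl, Fintype.card_fin, hcard]
  calc μ {A : ℕ → Bool | ∀ k, A (e k) = β k}
      ≤ ∑' j : ({i : Fin N // (i : ℕ) ∉ Set.range e} → Bool), μ (cylinder (List.ofFn (fun i : Fin N =>
        if h : (i : ℕ) ∈ Set.range e then β h.choose else j ⟨i, h⟩))) :=
        (measure_mono hcover).trans (measure_iUnion_le _)
    _ = ∑' _ : ({i : Fin N // (i : ℕ) ∉ Set.range e} → Bool), (1/2 : ENNReal) ^ N := by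
        congr 1; funext j; rw [hμ, List.length_ofFn]
    _ = (Fintype.card ({i : Fin N // (i : ℕ) ∉ Set.range e} → Bool) : ENNReal) * (1/2 : ENNReal) ^ N := by
        rw [tsum_fintype, Finset.sum_const, Finset.card_univ, nsmul_eq_mul]
    _ = (2 : ENNReal) ^ (N - Fintype.card ι) * (1/2 : ENNReal) ^ N := by
        rw [hcardJ]; push_cast; ring
    _ = (1/2 : ENNReal) ^ (Fintype.card ι) := by
        rw [one_div]
        obtain ⟨d, hd⟩ : ∃ d, N = d + Fintype.card ι := ⟨_, (Nat.sub_add_cancel hm).symm⟩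
        rw [hd, Nat.add_sub_cancel, pow_add, ← mul_assoc, ← mul_pow,
          ENNReal.mul_inv_cancel two_ne_zero ENNReal.ofNat_ne_top, one_pow, one_mul]

lemma infinite_prescribed_null {μ : Measure (ℕ → Bool)} (hμ : IsFairCoin μ) {S : Set ℕ}
    (hS : S.Infinite) (b : ℕ → Bool) :
    μ {A | ∀ n ∈ S, A n = b n} = 0 := by
  apply eq_zero_of_le_half_pow
  intro n
  obtain ⟨F, hFS, hFcard⟩ := hS.exists_subset_card_eq n
  have hmp := mu_prescribed hμ (fun k : F => (k : ℕ)) Subtype.val_injective (fun k => b k)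
  refine le_trans (measure_mono ?_) (le_trans hmp ?_)
  · intro A hA k
    exact hA k (hFS k.2)
  · rw [Fintype.card_coe, hFcard]

lemma sum_elim_inj {α : Type} {f g : α → ℕ} (hf : Function.Injective f)
    (hg : Function.Injective g) (hd : ∀ a b, f a ≠ g b) :
    Function.Injective (Sum.elim f g) := by
  intro s t h
  cases s <;> cases t <;> simp only [Sum.elim_inl, Sum.elim_inr] at h
  · exact congrArg Sum.inl (hf h)
  · exact absurd h (hd _ _)
  · exact absurd h.symm (hd _ _)
  · exact congrArg Sum.inr (hg h)

lemma exists_fam {x t : ℕ → ℕ} (hx : Function.Injective x) {Q : Set ℕ} (hQ : Q.Infinite)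
    (hfib : ∀ c, {v | v ∈ Q ∧ t v = c}.Finite) (hne : ∀ v ∈ Q, t v ≠ x v) (n : ℕ) :
    ∃ v : Fin n → ℕ, (∀ k, v k ∈ Q) ∧
      Function.Injective (Sum.elim (x ∘ v) (t ∘ v)) := by
  induction n with
  | zero =>
    refine ⟨fun k => k.elim0, fun k => k.elim0, ?_⟩
    intro s
    cases s with
    | inl a => exact a.elim0
    | inr a => exact a.elim0
  | succ n ih =>
    obtain ⟨v, hvQ, hvinj⟩ := ih
    classical
    set U : Finset ℕ := (Finset.univ.image (x ∘ v)) ∪ (Finset.univ.image (t ∘ v)) with hU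
    have hxvU : ∀ k, x (v k) ∈ U := fun k =>
      Finset.mem_union.2 (Or.inl (Finset.mem_image.2 ⟨k, Finset.mem_univ k, rfl⟩))
    have htvU : ∀ k, t (v k) ∈ U := fun k =>
      Finset.mem_union.2 (Or.inr (Finset.mem_image.2 ⟨k, Finset.mem_univ k, rfl⟩))
    have hbad1 : {w | x w ∈ (U : Set ℕ)}.Finite := Set.Finite.preimage hx.injOn U.finite_toSet
    have hbad2 : {w | w ∈ Q ∧ t w ∈ (U : Set ℕ)}.Finite := by
      have hsub : {w | w ∈ Q ∧ t w ∈ (U : Set ℕ)} ⊆ ⋃ c ∈ U, {v | v ∈ Q ∧ t v = c} := by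
        rintro w ⟨hwQ, hwU⟩
        exact Set.mem_biUnion hwU ⟨hwQ, rfl⟩
      exact Set.Finite.subset (Set.Finite.biUnion U.finite_toSet fun c _ => hfib c) hsub
    have hinf : (Q \ ({w | x w ∈ (U:Set ℕ)} ∪ {w | w ∈ Q ∧ t w ∈ (U:Set ℕ)})).Infinite :=
      hQ.diff (hbad1.union hbad2)
    obtain ⟨w, hw⟩ := hinf.nonempty
    have hwQ : w ∈ Q := hw.1
    have hxw : x w ∉ U := fun h => hw.2 (Or.inl h)
    have htw : t w ∉ U := fun h => hw.2 (Or.inr ⟨hwQ, h⟩)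
    -- components of the old injectivity
    have hxvinj : Function.Injective (x ∘ v) := fun a b h => by
      have h2 : (Sum.inl a : Fin n ⊕ Fin n) = Sum.inl b := hvinj (by simpa using h)
      simpa using h2
    have htvinj : Function.Injective (t ∘ v) := fun a b h => by
      have h2 : (Sum.inr a : Fin n ⊕ Fin n) = Sum.inr b := hvinj (by simpa using h)
      simpa using h2
    have hdis : ∀ a b, x (v a) ≠ t (v b) := fun a b h => by
      have h2 : (Sum.inl a : Fin n ⊕ Fin n) = Sum.inr b := hvinj (by simpa using h)
      simp at h2
    have hvinj' : Function.Injective v := fun a b h => hxvinj (congrArg x h)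
    have hwv : w ∉ Set.range v := by
      rintro ⟨k, rfl⟩
      exact hxw (hxvU k)
    refine ⟨Fin.cons w v, ?_, ?_⟩
    · intro k
      refine Fin.cases ?_ ?_ k
      · simpa using hwQ
      · intro k'; simpa using hvQ k'
    · have hc1 : x ∘ Fin.cons w v = Fin.cons (x w) (x ∘ v) := Fin.comp_cons x w v
      have hc2 : t ∘ Fin.cons w v = Fin.cons (t w) (t ∘ v) := Fin.comp_cons t w v
      apply sum_elim_inj
      · exact hx.comp (Fin.cons_injective_of_injective hwv hvinj')
      · rw [hc2]
        apply Fin.cons_injective_of_injective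
        · rintro ⟨k, hk⟩
          exact htw (hk ▸ htvU k)
        · exact htvinj
      · intro a b
        have ea := congrFun hc1 a
        have eb := congrFun hc2 b
        simp only [Function.comp_apply] at ea eb ⊢
        rw [ea, eb]
        refine Fin.cases ?_ (fun a' => ?_) a
        · refine Fin.cases ?_ (fun b' => ?_) b
          · simp only [Fin.cons_zero]
            exact fun h => hne w hwQ h.symm
          · simp only [Fin.cons_zero, Fin.cons_succ]
            exact fun h => hxw (by rw [h]; exact htvU b')
        · refine Fin.cases ?_ (fun b' => ?_) b
          · simp only [Fin.cons_succ, Fin.cons_zero]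
            exact fun h => htw (by rw [← h]; exact hxvU a')
          · simp only [Fin.cons_succ]
            exact hdis a' b'

lemma NUL {μ : Measure (ℕ → Bool)} (hμ : IsFairCoin μ) (x t : ℕ → ℕ)
    (hx : Function.Injective x) (P : ℕ → Prop) (hP : ∀ v, ¬ P v → t v ≠ x v) :
    μ {A : ℕ → Bool | ∀ v, (P v → A (x v) = false) ∧ (¬ P v → A (x v) = A (t v))} = 0 := by
  classical
  by_cases h1 : (setOf P).Infinite
  · apply measure_mono_null _ (infinite_prescribed_null hμ (h1.image hx.injOn) (fun _ => false))
    rintro A hA n ⟨v, hv, rfl⟩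
    exact (hA v).1 hv
  · have hQ : {v | ¬ P v}.Infinite := by
      have hf := Set.not_infinite.mp h1
      exact hf.infinite_compl
    by_cases h2 : ∃ c, {v | v ∈ {v | ¬ P v} ∧ t v = c}.Infinite
    · obtain ⟨c, hc⟩ := h2
      have himg := hc.image hx.injOn
      apply measure_mono_null
        (?_ : _ ⊆ {A : ℕ → Bool | ∀ n ∈ x '' {v | v ∈ {v | ¬ P v} ∧ t v = c}, A n = true}
          ∪ {A : ℕ → Bool | ∀ n ∈ x '' {v | v ∈ {v | ¬ P v} ∧ t v = c}, A n = false})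
      · exact measure_union_null
          (infinite_prescribed_null hμ himg (fun _ => true))
          (infinite_prescribed_null hμ himg (fun _ => false))
      · intro A hA
        have hval : ∀ n ∈ x '' {v | v ∈ {v | ¬ P v} ∧ t v = c}, A n = A c := by
          rintro n ⟨v, ⟨hvP, hvt⟩, rfl⟩
          rw [(hA v).2 hvP, hvt]
        cases hAc : A c with
        | true => exact Or.inl (fun n hn => (hval n hn).trans hAc)
        | false => exact Or.inr (fun n hn => (hval n hn).trans hAc)
    · push_neg at h2
      have hfib : ∀ c, {v | v ∈ {v | ¬ P v} ∧ t v = c}.Finite :=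
        fun c => h2 c
      apply eq_zero_of_le_half_pow
      intro n
      obtain ⟨v, hvQ, hvinj⟩ := exists_fam hx hQ hfib (fun v hv => hP v hv) n
      have hcover : {A : ℕ → Bool | ∀ v, (P v → A (x v) = false) ∧ (¬ P v → A (x v) = A (t v))}
          ⊆ ⋃ ε : Fin n → Bool,
            {A : ℕ → Bool | ∀ s : Fin n ⊕ Fin n,
              A (Sum.elim (x ∘ v) (t ∘ v) s) = Sum.elim ε ε s} := by
        intro A hA
        refine Set.mem_iUnion.2 ⟨fun k => A (x (v k)), ?_⟩
        intro s
        cases s with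
        | inl k => rfl
        | inr k =>
          have := (hA (v k)).2 (hvQ k)
          exact this.symm
      calc μ _ ≤ ∑' ε : Fin n → Bool, μ {A : ℕ → Bool | ∀ s : Fin n ⊕ Fin n,
              A (Sum.elim (x ∘ v) (t ∘ v) s) = Sum.elim ε ε s} :=
            (measure_mono hcover).trans (measure_iUnion_le _)
        _ ≤ ∑' _ : Fin n → Bool, (1/2 : ENNReal) ^ (Fintype.card (Fin n ⊕ Fin n)) :=
            ENNReal.tsum_le_tsum fun ε => mu_prescribed hμ _ hvinj (Sum.elim ε ε)
        _ ≤ (1/2 : ENNReal) ^ n := by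
            rw [tsum_fintype, Finset.sum_const, Finset.card_univ, nsmul_eq_mul,
              Fintype.card_fun, Fintype.card_bool, Fintype.card_fin, Fintype.card_sum,
              Fintype.card_fin, one_div]
            push_cast
            rw [pow_add, ← mul_assoc, ← mul_pow,
              ENNReal.mul_inv_cancel two_ne_zero ENNReal.ofNat_ne_top, one_pow, one_mul]

def mult (i x : ℕ) : ℕ := if (Nat.unpair x).1 = i then 2 else 1

def zmem (A : ℕ → Bool) (i : ℕ) (z : ℕ) : Prop :=
  (Nat.unpair z).2 < mult i (Nat.unpair z).1 ∧ A (Nat.unpair z).1 = true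

lemma countable_comp : Countable {g : ℕ → ℕ // Computable g} := by
  have h : ∀ g : {g : ℕ → ℕ // Computable g}, ∃ c : Nat.Partrec.Code,
      c.eval = (g.1 : ℕ →. ℕ) := fun g =>
    Nat.Partrec.Code.exists_code.mp (Partrec.nat_iff.mp g.2)
  have hinj : Function.Injective (fun g : {g : ℕ → ℕ // Computable g} => (h g).choose) := by
    intro g1 g2 he
    have he' : (h g1).choose = (h g2).choose := he
    have e1 := (h g1).choose_spec
    have e2 := (h g2).choose_spec
    rw [he', e2] at e1
    refine Subtype.ext (funext fun n => ?_)
    have h3 := congrFun e1 n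
    have h4 : Part.some (g2.1 n) = Part.some (g1.1 n) := h3
    exact Part.some_inj.mp h4.symm
  exact hinj.countable

lemma comp_red2 (i n₀ : ℕ) :
    Computable (fun z : ℕ =>
      if (Nat.unpair z).2 < mult i (Nat.unpair z).1 then (Nat.unpair z).1 else n₀) := by
  have u1 : Primrec fun z : ℕ => (Nat.unpair z).1 := Primrec.fst.comp Primrec.unpair
  have u2 : Primrec fun z : ℕ => (Nat.unpair z).2 := Primrec.snd.comp Primrec.unpair
  have hm : Primrec fun z : ℕ => mult i (Nat.unpair z).1 := by
    show Primrec fun z : ℕ => if (Nat.unpair ((Nat.unpair z).1)).1 = i then 2 else 1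
    exact Primrec.ite (Primrec.eq.comp (Primrec.fst.comp (Primrec.unpair.comp u1))
      (Primrec.const i)) (Primrec.const 2) (Primrec.const 1)
  exact (Primrec.ite (Primrec.nat_lt.comp u2 hm) u1 (Primrec.const n₀)).to_comp

lemma comp_red1 : Computable (fun a : ℕ => Nat.pair a 0) :=
  (Primrec₂.natPair.comp Primrec.id (Primrec.const 0)).to_comp

def Bad (p : ℕ × ℕ × {g : ℕ → ℕ // Computable g}) : Set (ℕ → Bool) :=
  {A | p.1 ≠ p.2.1 ∧ Function.Injective p.2.2.1 ∧
    ∀ z, zmem A p.1 z ↔ zmem A p.2.1 (p.2.2.1 z)}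

lemma bad_null {μ : Measure (ℕ → Bool)} (hμ : IsFairCoin μ)
    (p : ℕ × ℕ × {g : ℕ → ℕ // Computable g}) : μ (Bad p) = 0 := by
  classical
  obtain ⟨i, j, g⟩ := p
  by_cases hij : i ≠ j
  swap
  · exact measure_mono_null (fun A hA => absurd hA.1 hij) measure_empty
  by_cases hginj : Function.Injective g.1
  swap
  · exact measure_mono_null (fun A hA => absurd hA.2.1 hginj) measure_empty
  set x : ℕ → ℕ := fun v => Nat.pair i v with hxdef
  have hx : Function.Injective x := by
    intro a b h
    have h2 := congrArg (fun z => (Nat.unpair z).2) h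
    simpa [hxdef] using h2
  set w0 : ℕ → ℕ := fun v => g.1 (Nat.pair (x v) 0) with hw0
  set w1 : ℕ → ℕ := fun v => g.1 (Nat.pair (x v) 1) with hw1
  set c0 : ℕ → Prop := fun v => (Nat.unpair (w0 v)).2 < mult j (Nat.unpair (w0 v)).1 with hc0
  set c1 : ℕ → Prop := fun v => (Nat.unpair (w1 v)).2 < mult j (Nat.unpair (w1 v)).1 with hc1
  set P : ℕ → Prop := fun v => ¬ (c0 v ∧ c1 v) with hPdef
  set t : ℕ → ℕ := fun v =>
    if (Nat.unpair (w0 v)).1 = x v then (Nat.unpair (w1 v)).1 else (Nat.unpair (w0 v)).1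
    with htdef
  have hmxi : ∀ v, mult i (x v) = 2 := by
    intro v; simp [mult, hxdef]
  have hmxj : ∀ v, mult j (x v) = 1 := by
    intro v
    simp only [mult, hxdef, Nat.unpair_pair]
    rw [if_neg hij]
  have hw01 : ∀ v, w0 v ≠ w1 v := by
    intro v h
    have h2 := hginj h
    have h3 := congrArg (fun z => (Nat.unpair z).2) h2
    simp at h3
  have hP : ∀ v, ¬ P v → t v ≠ x v := by
    intro v hv
    rw [hPdef, not_not] at hv
    obtain ⟨h0, h1⟩ := hv
    simp only [htdef]
    by_cases hy0 : (Nat.unpair (w0 v)).1 = x v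
    · rw [if_pos hy0]
      intro hy1
      apply hw01 v
      have k0 : (Nat.unpair (w0 v)).2 = 0 := by
        rw [hc0] at h0
        rw [hy0, hmxj v] at h0
        omega
      have k1 : (Nat.unpair (w1 v)).2 = 0 := by
        rw [hc1] at h1
        rw [hy1, hmxj v] at h1
        omega
      have e0 : w0 v = Nat.pair (x v) 0 := by
        conv_lhs => rw [← Nat.pair_unpair (w0 v)]
        rw [hy0, k0]
      have e1 : w1 v = Nat.pair (x v) 0 := by
        conv_lhs => rw [← Nat.pair_unpair (w1 v)]
        rw [hy1, k1]
      rw [e0, e1]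
    · rw [if_neg hy0]
      exact hy0
  apply measure_mono_null _ (NUL hμ x t hx P hP)
  intro A hA
  obtain ⟨-, -, hred⟩ := hA
  intro v
  have hz0 : zmem A i (Nat.pair (x v) 0) ↔ A (x v) = true := by
    simp [zmem, Nat.unpair_pair, hmxi v]
  have hz1 : zmem A i (Nat.pair (x v) 1) ↔ A (x v) = true := by
    simp [zmem, Nat.unpair_pair, hmxi v]
  have hr0 : A (x v) = true ↔ zmem A j (w0 v) := by
    rw [← hz0]; exact hred (Nat.pair (x v) 0)
  have hr1 : A (x v) = true ↔ zmem A j (w1 v) := by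
    rw [← hz1]; exact hred (Nat.pair (x v) 1)
  constructor
  · intro hPv
    rw [hPdef] at hPv
    cases hxv : A (x v) with
    | false => rfl
    | true =>
      exfalso
      apply hPv
      exact ⟨(hr0.mp hxv).1, (hr1.mp hxv).1⟩
  · intro hnPv
    rw [hPdef, not_not] at hnPv
    obtain ⟨h0, h1⟩ := hnPv
    have key : A (x v) = true ↔ A (t v) = true := by
      simp only [htdef]
      by_cases hy0 : (Nat.unpair (w0 v)).1 = x v
      · rw [if_pos hy0]
        constructor
        · intro h; exact (hr1.mp h).2
        · intro h; exact hr1.mpr ⟨h1, h⟩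
      · rw [if_neg hy0]
        constructor
        · intro h; exact (hr0.mp h).2
        · intro h; exact hr0.mpr ⟨h0, h⟩
    cases hxv : A (x v) <;> cases htv : A (t v) <;> simp_all

/-- For μ-almost every `A ∈ 2^ω`, the many-one degree of `A` contains an
infinite antichain of 1-degrees. -/
theorem stmt_15 (μ : Measure (ℕ → Bool)) (hμ : IsFairCoin μ) :
    ∀ᵐ A ∂μ, ∃ B : ℕ → Set ℕ,
      (∀ i, ManyOneEquiv (· ∈ B i) (fun n => A n = true)) ∧
      (∀ i j, i ≠ j → ¬ OneOneReducible (· ∈ B i) (· ∈ B j)) := by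
  have hcnt : Countable {g : ℕ → ℕ // Computable g} := countable_comp
  set N : Set (ℕ → Bool) :=
    {A | ∀ n, A n = true} ∪ ⋃ p : ℕ × ℕ × {g : ℕ → ℕ // Computable g}, Bad p with hN
  have hNnull : μ N = 0 := by
    apply measure_union_null
    · have h0 := infinite_prescribed_null hμ (Set.infinite_univ (α := ℕ)) (fun _ => true)
      apply measure_mono_null _ h0
      intro A hA n _
      exact hA n
    · exact measure_iUnion_null fun p => bad_null hμ p
  rw [Filter.eventually_iff, mem_ae_iff]
  apply measure_mono_null _ hNnull
  intro A hA
  by_contra hAN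
  apply hA
  have hA1 : ¬ ∀ n, A n = true := fun h => hAN (Or.inl h)
  have hA2 : ∀ p, A ∉ Bad p := fun p hp => hAN (Or.inr (Set.mem_iUnion.2 ⟨p, hp⟩))
  obtain ⟨n₀, hn₀⟩ : ∃ n, A n = false := by
    push_neg at hA1
    obtain ⟨n, hn⟩ := hA1
    exact ⟨n, by simpa using hn⟩
  refine ⟨fun i => {z | zmem A i z}, ?_, ?_⟩
  · intro i
    constructor
    · refine ⟨fun z => if (Nat.unpair z).2 < mult i (Nat.unpair z).1 then (Nat.unpair z).1
        else n₀, comp_red2 i n₀, ?_⟩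
      intro z
      by_cases h : (Nat.unpair z).2 < mult i (Nat.unpair z).1
      · simp [zmem, h]
      · simp [zmem, h, hn₀]
    · refine ⟨fun a => Nat.pair a 0, comp_red1, ?_⟩
      intro a
      have hpos : 0 < mult i a := by
        unfold mult
        split <;> norm_num
      simp [zmem, Nat.unpair_pair, hpos]
  · rintro i j hij ⟨g, hgc, hginj, hgr⟩
    exact hA2 (i, j, ⟨g, hgc⟩) ⟨hij, hginj, fun z => hgr z⟩
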